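/- Let n ≥ 2 be an integer, let U ⊆ ℝ² be open, and let F, G : U → ℝ be twice continuously differentiable. Denote by ∂₁ the partial derivative in the first variable ρ and by ∂₂ the partial derivative in the second variable θ. Assume that at every point of U: (n−2)·∂₁∂₂G + ∂₁∂₂F − (n−1)·(∂₁G)(∂₂F) = 0 and ∂₁∂₂G − 2(∂₂F)(∂₁G) + (∂₂G)(∂₁G) = 0. Then at every point of U, ∂₁( e^{−G} ∂₂F ) = −((n−2)/2)·∂₁( e^{−G} ∂₂G ); consequently e^{−G}( ∂₂F + ((n−2)/2) ∂₂G ) is locally independent of ρ. -/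

import Mathlib

/-- Partial derivative in the first (radial) variable `ρ`. -/
noncomputable def pd1 (F : ℝ × ℝ → ℝ) (p : ℝ × ℝ) : ℝ :=
  deriv (fun x : ℝ => F (x, p.2)) p.1

/-- Partial derivative in the second (angular) variable `θ`. -/
noncomputable def pd2 (F : ℝ × ℝ → ℝ) (p : ℝ × ℝ) : ℝ :=
  deriv (fun y : ℝ => F (p.1, y)) p.2

lemma line1_hasDerivAt (c x : ℝ) : HasDerivAt (fun t : ℝ => (t, c)) ((1 : ℝ), (0 : ℝ)) x :=
  HasDerivAt.prodMk (hasDerivAt_id x) (hasDerivAt_const x c)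

lemma line2_hasDerivAt (c y : ℝ) : HasDerivAt (fun t : ℝ => (c, t)) ((0 : ℝ), (1 : ℝ)) y :=
  HasDerivAt.prodMk (hasDerivAt_const y c) (hasDerivAt_id y)

/-- On an open set where `H` is differentiable, `pd2 H q = fderiv H q (0,1)`. -/
lemma pd2_eq_fderiv {U : Set (ℝ × ℝ)} (hU : IsOpen U) {H : ℝ × ℝ → ℝ}
    (hH : ContDiffOn ℝ 2 H U) {q : ℝ × ℝ} (hq : q ∈ U) :
    pd2 H q = fderiv ℝ H q (0, 1) := by
  have hd : DifferentiableAt ℝ H q :=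
    ((hH.differentiableOn (by norm_num)) q hq).differentiableAt (hU.mem_nhds hq)
  have h : HasDerivAt (fun y : ℝ => H (q.1, y)) (fderiv ℝ H q (0, 1)) q.2 :=
    hd.hasFDerivAt.comp_hasDerivAt_of_eq q.2 (line2_hasDerivAt q.1 q.2) (by simp)
  exact h.deriv

/-- Radial derivative of a `C²` function along the line, as a `HasDerivAt`. -/
lemma pd1_hasDerivAt {U : Set (ℝ × ℝ)} (hU : IsOpen U) {H : ℝ × ℝ → ℝ}
    (hH : ContDiffOn ℝ 2 H U) {q : ℝ × ℝ} (hq : q ∈ U) :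
    HasDerivAt (fun x : ℝ => H (x, q.2)) (pd1 H q) q.1 := by
  have hd : DifferentiableAt ℝ H q :=
    ((hH.differentiableOn (by norm_num)) q hq).differentiableAt (hU.mem_nhds hq)
  have h : HasDerivAt (fun x : ℝ => H (x, q.2)) (fderiv ℝ H q (1, 0)) q.1 :=
    hd.hasFDerivAt.comp_hasDerivAt_of_eq q.1 (line1_hasDerivAt q.2 q.1) (by simp)
  have := h.deriv
  rw [show pd1 H q = deriv (fun x : ℝ => H (x, q.2)) q.1 from rfl, this]
  exact h

/-- Radial derivative of the angular derivative of a `C²` function along the line. -/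
lemma pd1_pd2_hasDerivAt {U : Set (ℝ × ℝ)} (hU : IsOpen U) {H : ℝ × ℝ → ℝ}
    (hH : ContDiffOn ℝ 2 H U) {q : ℝ × ℝ} (hq : q ∈ U) :
    HasDerivAt (fun x : ℝ => pd2 H (x, q.2)) (pd1 (pd2 H) q) q.1 := by
  set Φ : ℝ × ℝ → ℝ := fun r => fderiv ℝ H r (0, 1) with hΦdef
  have hΦ : DifferentiableOn ℝ Φ U := by
    have h1 : ContDiffOn ℝ 1 (fderiv ℝ H) U := hH.fderiv_of_isOpen hU (by norm_num)
    exact (h1.clm_apply contDiffOn_const).differentiableOn (by norm_num)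
  have hΦa : DifferentiableAt ℝ Φ q := (hΦ q hq).differentiableAt (hU.mem_nhds hq)
  have hline : HasDerivAt (fun x : ℝ => Φ (x, q.2)) (fderiv ℝ Φ q (1, 0)) q.1 :=
    hΦa.hasFDerivAt.comp_hasDerivAt_of_eq q.1 (line1_hasDerivAt q.2 q.1) (by simp)
  -- `pd2 H` and `Φ` agree near the line through `q`
  have hnhds : ∀ᶠ x in nhds q.1, (x, q.2) ∈ U := by
    have hc : Continuous (fun x : ℝ => (x, q.2)) := continuous_id.prodMk continuous_const
    have : IsOpen ((fun x : ℝ => (x, q.2)) ⁻¹' U) := hU.preimage hc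
    exact this.mem_nhds (by simpa using hq)
  have heq : (fun x : ℝ => pd2 H (x, q.2)) =ᶠ[nhds q.1] (fun x : ℝ => Φ (x, q.2)) := by
    filter_upwards [hnhds] with x hx
    exact pd2_eq_fderiv hU hH hx
  have h' : HasDerivAt (fun x : ℝ => pd2 H (x, q.2)) (fderiv ℝ Φ q (1, 0)) q.1 :=
    hline.congr_of_eventuallyEq heq
  have := h'.deriv
  rw [show pd1 (pd2 H) q = deriv (fun x : ℝ => pd2 H (x, q.2)) q.1 from rfl, this]
  exact h'

/-- The second first-integral (equation (2.35)) in the rigidity analysis of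
the substatic Bishop–Gromov theorem: the two PDEs for `F = log f`,
`G = log η` imply `∂₁(e^{-G} ∂₂F) = -((n-2)/2) ∂₁(e^{-G} ∂₂G)`, so that
`e^{-G}(∂₂F + ((n-2)/2) ∂₂G)` is locally independent of `ρ`. -/
theorem first_integral_psi
    (n : ℕ) (hn : 2 ≤ n) (U : Set (ℝ × ℝ)) (hU : IsOpen U)
    (F G : ℝ × ℝ → ℝ)
    (hF : ContDiffOn ℝ 2 F U) (hG : ContDiffOn ℝ 2 G U)
    (h1 : ∀ p ∈ U, ((n : ℝ) - 2) * pd1 (pd2 G) p + pd1 (pd2 F) p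
      - ((n : ℝ) - 1) * (pd1 G p * pd2 F p) = 0)
    (h2 : ∀ p ∈ U, pd1 (pd2 G) p - 2 * (pd2 F p * pd1 G p)
      + pd2 G p * pd1 G p = 0) :
    (∀ p ∈ U,
      pd1 (fun q => Real.exp (-G q) * pd2 F q) p
        = -(((n : ℝ) - 2) / 2) * pd1 (fun q => Real.exp (-G q) * pd2 G q) p) ∧
    (∀ p ∈ U, ∃ ε > 0, ∀ x₁ x₂ : ℝ, |x₁ - p.1| < ε → |x₂ - p.1| < ε →
      (x₁, p.2) ∈ U → (x₂, p.2) ∈ U →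
      Real.exp (-G (x₁, p.2)) *
          (pd2 F (x₁, p.2) + ((n : ℝ) - 2) / 2 * pd2 G (x₁, p.2))
        = Real.exp (-G (x₂, p.2)) *
          (pd2 F (x₂, p.2) + ((n : ℝ) - 2) / 2 * pd2 G (x₂, p.2))) := by
  -- the two products, with explicit derivatives, at any point of `U`
  have key : ∀ q ∈ U,
      HasDerivAt (fun x : ℝ => Real.exp (-G (x, q.2)) * pd2 F (x, q.2))
        (Real.exp (-G q) * (-pd1 G q) * pd2 F q + Real.exp (-G q) * pd1 (pd2 F) q) q.1 ∧
      HasDerivAt (fun x : ℝ => Real.exp (-G (x, q.2)) * pd2 G (x, q.2))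
        (Real.exp (-G q) * (-pd1 G q) * pd2 G q + Real.exp (-G q) * pd1 (pd2 G) q) q.1 := by
    intro q hq
    have hGl : HasDerivAt (fun x : ℝ => -G (x, q.2)) (-pd1 G q) q.1 :=
      (pd1_hasDerivAt hU hG hq).neg
    have hexp : HasDerivAt (fun x : ℝ => Real.exp (-G (x, q.2)))
        (Real.exp (-G q) * (-pd1 G q)) q.1 := by
      have := hGl.exp
      simpa using this
    exact ⟨hexp.mul (pd1_pd2_hasDerivAt hU hF hq), hexp.mul (pd1_pd2_hasDerivAt hU hG hq)⟩
  have part1 : ∀ p ∈ U,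
      pd1 (fun q => Real.exp (-G q) * pd2 F q) p
        = -(((n : ℝ) - 2) / 2) * pd1 (fun q => Real.exp (-G q) * pd2 G q) p := by
    intro p hp
    obtain ⟨hA, hB⟩ := key p hp
    have eA : pd1 (fun q => Real.exp (-G q) * pd2 F q) p
        = Real.exp (-G p) * (-pd1 G p) * pd2 F p + Real.exp (-G p) * pd1 (pd2 F) p := hA.deriv
    have eB : pd1 (fun q => Real.exp (-G q) * pd2 G q) p
        = Real.exp (-G p) * (-pd1 G p) * pd2 G p + Real.exp (-G p) * pd1 (pd2 G) p := hB.deriv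
    rw [eA, eB]
    linear_combination Real.exp (-G p) * h1 p hp
      + (-(((n : ℝ) - 2) / 2)) * Real.exp (-G p) * h2 p hp
  refine ⟨part1, ?_⟩
  intro p hp
  obtain ⟨ε, hε, hball⟩ := Metric.isOpen_iff.1 hU p hp
  refine ⟨ε, hε, ?_⟩
  intro x₁ x₂ hx₁ hx₂ _ _
  set c : ℝ := ((n : ℝ) - 2) / 2 with hc
  set ψ : ℝ → ℝ := fun x => Real.exp (-G (x, p.2)) * pd2 F (x, p.2)
    + c * (Real.exp (-G (x, p.2)) * pd2 G (x, p.2)) with hψdef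
  have hmem : ∀ x : ℝ, x ∈ Metric.ball p.1 ε → (x, p.2) ∈ U := by
    intro x hx
    apply hball
    simp only [Metric.mem_ball] at hx ⊢
    rw [Prod.dist_eq]
    simpa [Real.dist_eq] using hx
  have hψ : ∀ x ∈ Metric.ball p.1 ε, HasDerivAt ψ 0 x := by
    intro x hx
    have hqU : ((x, p.2) : ℝ × ℝ) ∈ U := hmem x hx
    obtain ⟨hA, hB⟩ := key (x, p.2) hqU
    have h0 : HasDerivAt ψ
        ((Real.exp (-G (x, p.2)) * (-pd1 G (x, p.2)) * pd2 F (x, p.2)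
            + Real.exp (-G (x, p.2)) * pd1 (pd2 F) (x, p.2))
          + c * (Real.exp (-G (x, p.2)) * (-pd1 G (x, p.2)) * pd2 G (x, p.2)
            + Real.exp (-G (x, p.2)) * pd1 (pd2 G) (x, p.2))) x :=
      hA.add (hB.const_mul c)
    have hval := part1 (x, p.2) hqU
    have eA : pd1 (fun q => Real.exp (-G q) * pd2 F q) ((x : ℝ), p.2)
        = Real.exp (-G (x, p.2)) * (-pd1 G (x, p.2)) * pd2 F (x, p.2)
            + Real.exp (-G (x, p.2)) * pd1 (pd2 F) (x, p.2) := hA.deriv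
    have eB : pd1 (fun q => Real.exp (-G q) * pd2 G q) ((x : ℝ), p.2)
        = Real.exp (-G (x, p.2)) * (-pd1 G (x, p.2)) * pd2 G (x, p.2)
            + Real.exp (-G (x, p.2)) * pd1 (pd2 G) (x, p.2) := hB.deriv
    rw [eA, eB] at hval
    have : (Real.exp (-G (x, p.2)) * (-pd1 G (x, p.2)) * pd2 F (x, p.2)
            + Real.exp (-G (x, p.2)) * pd1 (pd2 F) (x, p.2))
          + c * (Real.exp (-G (x, p.2)) * (-pd1 G (x, p.2)) * pd2 G (x, p.2)
            + Real.exp (-G (x, p.2)) * pd1 (pd2 G) (x, p.2)) = 0 := by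
      rw [hval]; ring
    rwa [this] at h0
  have hconst : ψ x₁ = ψ x₂ := by
    have hconv : Convex ℝ (Metric.ball p.1 ε) := convex_ball p.1 ε
    have hdiff : DifferentiableOn ℝ ψ (Metric.ball p.1 ε) := fun z hz =>
      ((hψ z hz).differentiableAt).differentiableWithinAt
    refine hconv.is_const_of_fderivWithin_eq_zero hdiff (fun z hz => ?_)
      (by simp [Real.dist_eq, hx₁]) (by simp [Real.dist_eq, hx₂])
    have := ((hψ z hz).hasFDerivAt.hasFDerivWithinAt).fderivWithin
      (Metric.isOpen_ball.uniqueDiffWithinAt hz)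
    rw [this]
    ext t
    simp
  have l1 : Real.exp (-G (x₁, p.2)) * (pd2 F (x₁, p.2) + c * pd2 G (x₁, p.2)) = ψ x₁ := by
    rw [hψdef]; ring
  have l2 : Real.exp (-G (x₂, p.2)) * (pd2 F (x₂, p.2) + c * pd2 G (x₂, p.2)) = ψ x₂ := by
    rw [hψdef]; ring
  rw [l1, l2, hconst]
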